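/- arXiv:1111.1863 — 2 statements merged into one kernel-verified Lean document; each statement's English description precedes it below -/
import Mathlib

section
/- Let S be a numerical semigroup generated by a generalized arithmetic sequence, i.e. S = ⟨m, hm+d, hm+2d, ..., hm+ld⟩ where m ≥ 2, h ≥ 1, d ≥ 1, gcd(m,d) = 1 and 1 ≤ l ≤ m−2. Then S satisfies Wilf's conjecture, i.e. f(S) + 1 ≤ n(S)·ν(S). -/
private def cdiv (l k : ℕ) : ℕ := (k + l - 1) / l

private lemma cdiv_le_iff {l : ℕ} (hl : 1 ≤ l) (k t : ℕ) : cdiv l k ≤ t ↔ k ≤ t * l := by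
  unfold cdiv
  rw [Nat.div_le_iff_le_mul_add_pred hl, mul_comm t l]
  generalize l * t = a
  omega

private lemma le_cdiv {l : ℕ} (hl : 1 ≤ l) (k : ℕ) : k ≤ cdiv l k * l :=
  (cdiv_le_iff hl k _).mp le_rfl

private lemma cdiv_mono {l : ℕ} (hl : 1 ≤ l) {k k' : ℕ} (hk : k ≤ k') :
    cdiv l k ≤ cdiv l k' :=
  (cdiv_le_iff hl k _).mpr (le_trans hk (le_cdiv hl k'))

private lemma cdiv_zero {l : ℕ} (hl : 1 ≤ l) : cdiv l 0 = 0 := by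
  unfold cdiv; exact Nat.div_eq_of_lt (by omega)

private lemma cdiv_pos {l k : ℕ} (hl : 1 ≤ l) (hk : 1 ≤ k) : 1 ≤ cdiv l k := by
  by_contra hc
  have h0 : cdiv l k ≤ 0 := by omega
  have := (cdiv_le_iff hl k 0).mp h0
  omega

private lemma cdiv_small {l k : ℕ} (hl : 1 ≤ l) (hk : 1 ≤ k) (hkl : k ≤ l) : cdiv l k = 1 := by
  have h1 := cdiv_pos hl hk
  have h2 : cdiv l k ≤ 1 := (cdiv_le_iff hl k 1).mpr (by omega)
  omega

private lemma cdiv_add_l {l k : ℕ} (hl : 1 ≤ l) : cdiv l (k + l) = cdiv l k + 1 := by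
  unfold cdiv
  have h1 : k + l + l - 1 = (k + l - 1) + l := by omega
  rw [h1, Nat.add_div_right _ hl]

private lemma mod_cancel {m d a b : ℕ} (hgcd : Nat.gcd m d = 1) (ha : a < m) (hb : b < m)
    (hab : a * d % m = b * d % m) : a = b := by
  have h1 : a ≡ b [MOD m] := Nat.ModEq.cancel_right_of_coprime hgcd hab
  have h2 : a % m = b % m := h1
  rw [Nat.mod_eq_of_lt ha, Nat.mod_eq_of_lt hb] at h2
  exact h2

private lemma mod_image {m d : ℕ} (hm : 0 < m) (hgcd : Nat.gcd m d = 1) :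
    (Finset.range m).image (fun k => k * d % m) = Finset.range m := by
  apply Finset.eq_of_subset_of_card_le
  · intro x hx
    simp only [Finset.mem_image, Finset.mem_range] at hx ⊢
    obtain ⟨k, _, rfl⟩ := hx
    exact Nat.mod_lt _ hm
  · rw [Finset.card_image_of_injOn, Finset.card_range]
    intro a ha b hb hab
    simp only [Finset.coe_range, Set.mem_Iio] at ha hb
    exact mod_cancel hgcd ha hb hab

private lemma sum_mod_eq {m d : ℕ} (hm : 0 < m) (hgcd : Nat.gcd m d = 1) :
    ∑ k ∈ Finset.range m, k * d % m = ∑ k ∈ Finset.range m, k := by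
  have h1 : ∑ x ∈ (Finset.range m).image (fun k => k * d % m), x
      = ∑ k ∈ Finset.range m, k * d % m := by
    apply Finset.sum_image
    intro a ha b hb hab
    rw [Finset.mem_coe, Finset.mem_range] at ha hb
    exact mod_cancel hgcd ha hb hab
  rw [← h1, mod_image hm hgcd]

private lemma sum_div_d {m d : ℕ} (hm : 0 < m) (hd : 1 ≤ d) (hgcd : Nat.gcd m d = 1) :
    2 * (∑ k ∈ Finset.range m, k * d / m) = (m - 1) * (d - 1) := by
  set D := ∑ k ∈ Finset.range m, k * d / m with hD
  have hsplit : ∑ k ∈ Finset.range m, k * d = m * D + ∑ k ∈ Finset.range m, k * d % m := by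
    rw [hD, Finset.mul_sum, ← Finset.sum_add_distrib]
    apply Finset.sum_congr rfl
    intro k _
    exact (Nat.div_add_mod (k * d) m).symm
  rw [sum_mod_eq hm hgcd] at hsplit
  have hsum : (∑ k ∈ Finset.range m, k) * 2 = m * (m - 1) := Finset.sum_range_id_mul_two m
  have hmul : ∑ k ∈ Finset.range m, k * d = (∑ k ∈ Finset.range m, k) * d := by
    rw [Finset.sum_mul]
  rw [hmul] at hsplit
  have key : m * (2 * D) = m * ((m - 1) * (d - 1)) := by
    have e1 : (∑ k ∈ Finset.range m, k) * d * 2 = m * (m-1) * d := by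
      rw [mul_comm _ (2:ℕ), ← mul_assoc]
      rw [mul_comm (2:ℕ) _, hsum]
    have e2 : (m * D + ∑ k ∈ Finset.range m, k) * 2 = m * (2 * D) + m * (m-1) := by
      rw [add_mul, hsum]; ring
    rw [hsplit] at e1
    rw [e2] at e1
    have e3 : m * (m-1) * d = m * ((m-1) * d) := by ring
    have e4 : (m - 1) * d = (m-1)*(d-1) + (m-1) := by
      obtain ⟨d', rfl⟩ : ∃ d', d = d' + 1 := ⟨d - 1, by omega⟩
      simp [Nat.mul_add]
    rw [e3, e4, Nat.mul_add] at e1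
    omega
  exact Nat.eq_of_mul_eq_mul_left hm key

private lemma card_filter_le {q c : ℕ} :
    ((Finset.range q).filter (fun t => c ≤ t)).card = q - c := by
  have : (Finset.range q).filter (fun t => c ≤ t) = Finset.Ico c q := by
    ext t
    simp only [Finset.mem_filter, Finset.mem_range, Finset.mem_Ico]
    omega
  rw [this, Nat.card_Ico]

private lemma sum_ek {m l : ℕ} (hl : 1 ≤ l) (hm : 2 ≤ m) :
    2 * (∑ k ∈ Finset.range m, (cdiv l (m-1) - cdiv l k)) =
      l * (cdiv l (m-1)) * (cdiv l (m-1) - 1) + 2 * cdiv l (m-1) := by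
  set q := cdiv l (m-1) with hq
  have hq1 : 1 ≤ q := cdiv_pos hl (by omega)
  have hql : m - 1 ≤ q * l := le_cdiv hl (m-1)
  have hql2 : (q - 1) * l ≤ m - 2 := by
    by_contra hc
    have h2 : m - 1 ≤ (q-1) * l := by omega
    have := (cdiv_le_iff hl (m-1) (q-1)).mpr h2
    omega
  have hper : ∀ k ∈ Finset.range m, q - cdiv l k
      = ((Finset.range q).filter (fun t => k ≤ t * l)).card := by
    intro k hk
    have : (Finset.range q).filter (fun t => k ≤ t * l)
        = (Finset.range q).filter (fun t => cdiv l k ≤ t) := by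
      apply Finset.filter_congr
      intro t _
      exact (cdiv_le_iff hl k t).symm
    rw [this, card_filter_le]
  rw [Finset.sum_congr rfl hper]
  have hswap : ∑ k ∈ Finset.range m, ((Finset.range q).filter (fun t => k ≤ t * l)).card
      = ∑ t ∈ Finset.range q, ((Finset.range m).filter (fun k => k ≤ t * l)).card := by
    have h1 : ∀ k : ℕ, ((Finset.range q).filter (fun t => k ≤ t * l)).card
        = ∑ t ∈ Finset.range q, if k ≤ t*l then 1 else 0 := fun k => Finset.card_filter _ _
    have h2 : ∀ t : ℕ, ((Finset.range m).filter (fun k => k ≤ t * l)).card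
        = ∑ k ∈ Finset.range m, if k ≤ t*l then 1 else 0 := fun t => Finset.card_filter _ _
    simp only [h1, h2]
    exact Finset.sum_comm
  rw [hswap]
  have hinner : ∀ t ∈ Finset.range q, ((Finset.range m).filter (fun k => k ≤ t * l)).card
      = t * l + 1 := by
    intro t ht
    rw [Finset.mem_range] at ht
    have htl : t * l ≤ (q-1) * l := Nat.mul_le_mul_right l (by omega)
    have : (Finset.range m).filter (fun k => k ≤ t * l) = Finset.range (t * l + 1) := by
      ext k
      simp only [Finset.mem_filter, Finset.mem_range]
      omega
    rw [this, Finset.card_range]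
  rw [Finset.sum_congr rfl hinner, Finset.sum_add_distrib, ← Finset.sum_mul]
  simp only [Finset.sum_const, Finset.card_range, smul_eq_mul, mul_one]
  have hgauss : (∑ t ∈ Finset.range q, t) * 2 = q * (q - 1) := Finset.sum_range_id_mul_two q
  set Sq := ∑ t ∈ Finset.range q, t
  have hlg : l * (q * (q-1)) = l * (Sq * 2) := by rw [hgauss]
  calc 2 * (Sq * l + q) = l * (Sq * 2) + 2 * q := by ring
    _ = l * q * (q-1) + 2*q := by rw [← hlg]; ring

private lemma list_in_finset {Gf : Finset ℕ} :
    ∀ L : List ℕ, (∀ y ∈ L, y ∈ (Gf : Set ℕ)) → L.sum ≠ 0 →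
    (∀ a b : ℕ, a ∈ AddSubmonoid.closure (Gf : Set ℕ) →
      b ∈ AddSubmonoid.closure (Gf : Set ℕ) → a ≠ 0 → b ≠ 0 → a + b ≠ L.sum) →
    L.sum ∈ Gf := by
  intro L
  induction L with
  | nil => intro _ h0 _; simp at h0
  | cons y tl ih =>
    intro hL h0 hind
    have hy : y ∈ Gf := hL y (List.mem_cons_self)
    have htl : ∀ z ∈ tl, z ∈ (Gf : Set ℕ) := fun z hz => hL z (List.mem_cons_of_mem _ hz)
    rw [List.sum_cons] at h0 ⊢
    by_cases hy0 : y = 0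
    · subst hy0
      rw [zero_add] at h0 ⊢
      exact ih htl h0 (by simpa using hind)
    · by_cases ht0 : tl.sum = 0
      · rw [ht0, add_zero]; exact hy
      · exfalso
        have hyc : y ∈ AddSubmonoid.closure (Gf : Set ℕ) := AddSubmonoid.subset_closure hy
        have htc : tl.sum ∈ AddSubmonoid.closure (Gf : Set ℕ) :=
          AddSubmonoid.list_sum_mem _ (fun z hz => AddSubmonoid.subset_closure (htl z hz))
        exact hind y tl.sum hyc htc hy0 ht0 rfl

private lemma mem_of_indecomp {Gf : Finset ℕ} {x : ℕ}
    (hx : x ∈ AddSubmonoid.closure (Gf : Set ℕ)) (hx0 : x ≠ 0)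
    (hind : ∀ a b : ℕ, a ∈ AddSubmonoid.closure (Gf : Set ℕ) →
      b ∈ AddSubmonoid.closure (Gf : Set ℕ) → a ≠ 0 → b ≠ 0 → a + b ≠ x) : x ∈ Gf := by
  obtain ⟨L, hL, hsum⟩ := AddSubmonoid.exists_list_of_mem_closure hx
  subst hsum
  exact list_in_finset L hL hx0 hind

private lemma rep_aux {m h d l x : ℕ}
    (hx : x ∈ AddSubmonoid.closure (({m} : Set ℕ) ∪ (fun i => h * m + i * d) '' Set.Icc 1 l)) :
    ∃ a B K : ℕ, x = a * m + B * (h * m) + K * d ∧ K ≤ l * B := by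
  obtain ⟨L, hL, hsum⟩ := AddSubmonoid.exists_list_of_mem_closure hx
  clear hx
  induction L generalizing x with
  | nil =>
    refine ⟨0, 0, 0, ?_, le_rfl⟩
    simp at hsum; omega
  | cons y tl ih =>
    obtain ⟨a, B, K, h1, h2⟩ := ih (fun z hz => hL z (List.mem_cons_of_mem _ hz)) rfl
    have hsum' : y + tl.sum = x := by simpa using hsum
    rcases hL y (List.mem_cons_self) with hy | ⟨i, hi, hy⟩
    · refine ⟨a + 1, B, K, ?_, h2⟩
      simp only [Set.mem_singleton_iff] at hy
      subst hy
      rw [← hsum', h1]; ring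
    · simp only [Set.mem_Icc] at hi
      have hy2 : y = h * m + i * d := hy.symm
      refine ⟨a, B + 1, K + i, ?_, ?_⟩
      · rw [← hsum', hy2, h1]; ring
      · have hlB : l * (B + 1) = l * B + l := by ring
        omega

private lemma W_mem {m h d l : ℕ} (hl : 1 ≤ l) (k : ℕ) :
    cdiv l k * (h * m) + k * d ∈
      AddSubmonoid.closure (({m} : Set ℕ) ∪ (fun i => h * m + i * d) '' Set.Icc 1 l) := by
  induction k using Nat.strong_induction_on with
  | _ k ih =>
    rcases Nat.eq_zero_or_pos k with rfl | hk
    · have he : cdiv l 0 * (h * m) + 0 * d = 0 := by rw [cdiv_zero hl]; ring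
      rw [he]
      exact AddSubmonoid.zero_mem _
    · by_cases hkl : k ≤ l
      · rw [cdiv_small hl hk hkl, one_mul]
        exact AddSubmonoid.subset_closure (Or.inr ⟨k, Set.mem_Icc.mpr ⟨hk, hkl⟩, rfl⟩)
      · obtain ⟨k', rfl⟩ : ∃ k', k = k' + l := ⟨k - l, by omega⟩
        have h1 := ih k' (by omega)
        have h2 : h * m + l * d ∈
            AddSubmonoid.closure (({m} : Set ℕ) ∪ (fun i => h * m + i * d) '' Set.Icc 1 l) :=
          AddSubmonoid.subset_closure (Or.inr ⟨l, Set.mem_Icc.mpr ⟨hl, le_rfl⟩, rfl⟩)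
        have h3 := AddSubmonoid.add_mem _ h2 h1
        have he : cdiv l (k' + l) * (h * m) + (k' + l) * d
            = h * m + l * d + (cdiv l k' * (h * m) + k' * d) := by
          rw [cdiv_add_l hl]; ring
        rw [he]
        exact h3

private lemma final_ineq {m h d l q E D B0 : ℕ} (hh : 1 ≤ h) (hd : 1 ≤ d) (hl : 1 ≤ l)
    (hm : 3 ≤ m) (hq : 1 ≤ q) (hql : m - 1 ≤ q * l)
    (hE : 2 * E = l * q * (q-1) + 2 * q) (hD : 2 * D = (m-1)*(d-1))
    (hB : B0 + m = q * (h*m) + (m-1)*d) :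
    B0 + 1 ≤ (E * h + D) * (l + 1) := by
  obtain ⟨q', rfl⟩ : ∃ q', q = q' + 1 := ⟨q-1, by omega⟩
  obtain ⟨l', rfl⟩ : ∃ l', l = l' + 1 := ⟨l-1, by omega⟩
  obtain ⟨d', rfl⟩ : ∃ d', d = d' + 1 := ⟨d-1, by omega⟩
  obtain ⟨h', rfl⟩ : ∃ h', h = h' + 1 := ⟨h-1, by omega⟩
  obtain ⟨m', rfl⟩ : ∃ m', m = m' + 3 := ⟨m-3, by omega⟩
  have e1 : m' + 3 - 1 = m' + 2 := by omega
  have e2 : q' + 1 - 1 = q' := by omega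
  have e3 : d' + 1 - 1 = d' := by omega
  rw [e2] at hE
  rw [e1, e3] at hD
  rw [e1] at hB hql
  -- goal: B0 + 1 ≤ (E*(h'+1) + D)*(l'+2)
  have hT : 2*((E * (h'+1) + D) * (l'+1+1)) = 2*E*((h'+1)*(l'+2)) + 2*D*(l'+2) := by ring
  have hP : 2*E*((h'+1)*(l'+2))
      = 2*(q'+1)*(h'+1)*((q'+1)*(l'+1)+1) + (q'+1)*(h'+1)*q'*(l'+1)*l' := by
    calc 2*E*((h'+1)*(l'+2)) = ((l' + 1) * (q' + 1) * q' + 2 * (q' + 1))*((h'+1)*(l'+2)) := by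
          rw [hE]
      _ = 2*(q'+1)*(h'+1)*((q'+1)*(l'+1)+1) + (q'+1)*(h'+1)*q'*(l'+1)*l' := by ring
  have hMle : m' + 3 ≤ (q'+1)*(l'+1) + 1 := by omega
  have hp3 : 2*(q'+1)*(h'+1) * (m'+3) ≤ 2*(q'+1)*(h'+1) * ((q'+1)*(l'+1)+1) :=
    Nat.mul_le_mul_left _ hMle
  have hR : 2*D*(l'+2) = (m'+2)*d'*l' + 2*((m'+2)*d') := by
    calc 2*D*(l'+2) = ((m'+2)*d')*(l'+2) := by rw [hD]
      _ = (m'+2)*d'*l' + 2*((m'+2)*d') := by ring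
  have hB2 : 2*B0 + 2*(m'+3) = 2*(q'+1)*(h'+1) * (m'+3) + 2*((m'+2)*d') + 2*(m'+2) := by
    calc 2*B0 + 2*(m'+3) = 2*(B0 + (m'+3)) := by ring
      _ = 2*((q' + 1) * ((h' + 1) * (m' + 3)) + (m' + 2) * (d' + 1)) := by rw [hB]
      _ = 2*(q'+1)*(h'+1) * (m'+3) + 2*((m'+2)*d') + 2*(m'+2) := by ring
  have hnn1 : 0 ≤ (q'+1)*(h'+1)*q'*(l'+1)*l' := Nat.zero_le _
  have hnn2 : 0 ≤ (m'+2)*d'*l' := Nat.zero_le _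
  linarith [hT, hP, hp3, hR, hB2, hnn1, hnn2]



/-- A numerical semigroup: an additive submonoid of `ℕ` (containing `0`, closed under
addition) whose complement in `ℕ` is finite. -/
structure NumericalSemigroup where
  carrier : Set ℕ
  zero_mem : 0 ∈ carrier
  add_mem : ∀ ⦃a b : ℕ⦄, a ∈ carrier → b ∈ carrier → a + b ∈ carrier
  cofinite : (carrierᶜ : Set ℕ).Finite

namespace NumericalSemigroup

/-- The multiplicity `m(S)`: the smallest positive element of `S`. -/
noncomputable def mult (S : NumericalSemigroup) : ℕ :=
  sInf {s : ℕ | s ∈ S.carrier ∧ 0 < s}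

/-- The embedding dimension `ν(S)`: the cardinality of the (unique) minimal system of
generators of `S`, i.e. the least cardinality of a generating set. -/
noncomputable def embdim (S : NumericalSemigroup) : ℕ :=
  sInf {n : ℕ | ∃ G : Finset ℕ,
    S.carrier = (AddSubmonoid.closure (G : Set ℕ) : Set ℕ) ∧ G.card = n}

/-- The Frobenius number `f(S)`: the largest integer not belonging to `S`. -/
noncomputable def frob (S : NumericalSemigroup) : ℤ :=
  sSup {x : ℤ | ∀ s ∈ S.carrier, (s : ℤ) ≠ x}

/-- `n(S)`: the number of elements of `S` smaller than the Frobenius number. -/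
noncomputable def small (S : NumericalSemigroup) : ℕ :=
  {s : ℕ | s ∈ S.carrier ∧ (s : ℤ) < S.frob}.ncard

/-- The type `t(S)`: the number of pseudo-Frobenius numbers of `S`, i.e. integers
`x ∉ S` such that `x + s ∈ S` for every nonzero `s ∈ S`. -/
noncomputable def typ (S : NumericalSemigroup) : ℕ :=
  {x : ℤ | (∀ s ∈ S.carrier, (s : ℤ) ≠ x) ∧
    ∀ s ∈ S.carrier, 0 < s → ∃ u ∈ S.carrier, (u : ℤ) = x + s}.ncard

/-- The `k`-th interval `I_k = [k·m, (k+1)·m - 1]` (for a given `m`). -/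
def interval (m k : ℕ) : Set ℕ := Set.Ico (k * m) ((k + 1) * m)

/-- `n_k`: the number of elements of `S ∩ I_k` smaller than the Frobenius number. -/
noncomputable def nk (S : NumericalSemigroup) (k : ℕ) : ℕ :=
  {s : ℕ | s ∈ S.carrier ∩ interval S.mult k ∧ (s : ℤ) < S.frob}.ncard

/-- `L = ⌊f(S)/m(S)⌋`. -/
noncomputable def Lindex (S : NumericalSemigroup) : ℤ := S.frob / (S.mult : ℤ)

/-- `ρ = f(S) + 1 - L·m(S)`. -/
noncomputable def rho (S : NumericalSemigroup) : ℤ :=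
  S.frob + 1 - S.Lindex * (S.mult : ℤ)

/-- The Apéry set `Ap(S) = {w ∈ S : w - m(S) ∉ S}`. -/
def apery (S : NumericalSemigroup) : Set ℕ :=
  {w : ℕ | w ∈ S.carrier ∧ ∀ u ∈ S.carrier, u + S.mult ≠ w}

theorem apery_finite (S : NumericalSemigroup) : S.apery.Finite := by
  apply Set.Finite.subset ((Set.finite_Iio S.mult).union (S.cofinite.image (· + S.mult)))
  intro x hx
  by_cases h : x < S.mult
  · exact Or.inl h
  · refine Or.inr ⟨x - S.mult, fun hmem => hx.2 _ hmem (by omega), ?_⟩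
    show x - S.mult + S.mult = x
    omega

/-- `w j`: the `(j+1)`-st smallest element of the Apéry set, so that
`Ap(S) = {w 0 < w 1 < ... < w (m-1)}` with `w 0 = 0`. -/
noncomputable def w (S : NumericalSemigroup) (j : ℕ) : ℕ :=
  (S.apery_finite.toFinset.sort (· ≤ ·)).getD j 0

/-- `ε_j`: the number of `k ∈ {0, ..., L-1}` such that `|I_k ∩ S| = j`. -/
noncomputable def eps (S : NumericalSemigroup) (j : ℕ) : ℕ :=
  {k : ℕ | (k : ℤ) < S.Lindex ∧ (S.carrier ∩ interval S.mult k).ncard = j}.ncard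

/-- `η_j`: the number of `k ∈ ℕ` such that `|I_k ∩ S| = j`. -/
noncomputable def eta (S : NumericalSemigroup) (j : ℕ) : ℕ :=
  {k : ℕ | (S.carrier ∩ interval S.mult k).ncard = j}.ncard

/-- A numerical semigroup generated by a generalized arithmetic sequence
`m, hm+d, hm+2d, ..., hm+ld` (with `m ≥ 2`, `h ≥ 1`, `d ≥ 1`, `gcd(m,d) = 1`,
`1 ≤ l ≤ m-2`) satisfies Wilf's conjecture. -/
theorem wilf_of_generalized_arithmetic (S : NumericalSemigroup)
    (m h d l : ℕ) (hm : 2 ≤ m) (hh : 1 ≤ h) (hd : 1 ≤ d)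
    (hl : 1 ≤ l) (hlm : l ≤ m - 2) (hgcd : Nat.gcd m d = 1)
    (hgen : S.carrier =
      (AddSubmonoid.closure (({m} : Set ℕ) ∪ (fun i => h * m + i * d) '' Set.Icc 1 l) : Set ℕ)) :
    S.frob + 1 ≤ (S.small : ℤ) * (S.embdim : ℤ) :=
    by
  classical
  have hm3 : 3 ≤ m := by omega
  have hm0 : 0 < m := by omega
  have hhm : m ≤ h * m := Nat.le_mul_of_pos_left m hh
  set q := cdiv l (m - 1) with hqdef
  have hq1 : 1 ≤ q := cdiv_pos hl (by omega)
  have hmemS : ∀ x : ℕ, x ∈ S.carrier ↔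
      x ∈ AddSubmonoid.closure (({m} : Set ℕ) ∪ (fun i => h * m + i * d) '' Set.Icc 1 l) := by
    intro x; rw [hgen]; exact Iff.rfl
  have hrep : ∀ x ∈ S.carrier, ∃ a B K : ℕ, x = a * m + B * (h * m) + K * d ∧ K ≤ l * B :=
    fun x hx => rep_aux ((hmemS x).mp hx)
  have hWS : ∀ k : ℕ, cdiv l k * (h * m) + k * d ∈ S.carrier :=
    fun k => (hmemS _).mpr (W_mem hl k)
  have hmS : m ∈ S.carrier :=
    (hmemS m).mpr (AddSubmonoid.subset_closure (Or.inl rfl))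
  have hmulS : ∀ j : ℕ, j * m ∈ S.carrier := by
    intro j
    induction j with
    | zero => simpa using S.zero_mem
    | succ j ih =>
      have : (j + 1) * m = j * m + m := by ring
      rw [this]
      exact S.add_mem ih hmS
  have hmodW : ∀ k : ℕ, (cdiv l k * (h * m) + k * d) % m = k * d % m := by
    intro k
    have he : cdiv l k * (h * m) + k * d = k * d + (cdiv l k * h) * m := by ring
    rw [he, Nat.add_mul_mod_self_right]
  have hgeW : ∀ x ∈ S.carrier, ∀ k : ℕ, k < m → x % m = k * d % m →
      cdiv l k * (h * m) + k * d ≤ x := by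
    intro x hx k hkm hmod
    obtain ⟨a, B, K, hx1, hx2⟩ := hrep x hx
    have hxm : x % m = K * d % m := by
      rw [hx1]
      have he : a * m + B * (h * m) + K * d = K * d + (a + B * h) * m := by ring
      rw [he, Nat.add_mul_mod_self_right]
    have hKk : K * d % m = k * d % m := hxm.symm.trans hmod
    have hkK : k ≤ K := by
      by_contra hc
      push_neg at hc
      have hKm : K < m := by omega
      exact absurd (mod_cancel hgcd hKm hkm hKk) (by omega)
    have hB : cdiv l K ≤ B := (cdiv_le_iff hl K B).mpr (by rw [mul_comm]; exact hx2)
    calc cdiv l k * (h * m) + k * d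
        ≤ B * (h * m) + K * d :=
          add_le_add (Nat.mul_le_mul_right _ (le_trans (cdiv_mono hl hkK) hB))
            (Nat.mul_le_mul_right _ hkK)
      _ ≤ x := by rw [hx1]; omega
  have hqhm : m ≤ q * (h * m) := le_trans hhm (Nat.le_mul_of_pos_left _ hq1)
  set B0 := q * (h * m) + (m - 1) * d - m with hB0def
  have hB0m : B0 + m = q * (h * m) + (m - 1) * d := by
    rw [hB0def]; omega
  have hB0mod : B0 % m = (m - 1) * d % m := by
    obtain ⟨u, hu⟩ : ∃ u, q * h = u + 1 := ⟨q * h - 1, by have h9 : 1*1 ≤ q*h := Nat.mul_le_mul hq1 hh; omega⟩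
    have h1 : q * (h * m) = u * m + m := by rw [← mul_assoc, hu]; ring
    have h2 : B0 = (m - 1) * d + u * m := by omega
    rw [h2, Nat.add_mul_mod_self_right]
  have hB0notS : B0 ∉ S.carrier := by
    intro hB
    have h1 := hgeW B0 hB (m - 1) (by omega) hB0mod
    rw [← hqdef] at h1
    omega
  have hbig : ∀ N : ℕ, B0 < N → N ∈ S.carrier := by
    intro N hN
    have hNm : N % m ∈ Finset.range m := Finset.mem_range.mpr (Nat.mod_lt _ hm0)
    rw [← mod_image hm0 hgcd] at hNm
    obtain ⟨k, hk, hkd⟩ := Finset.mem_image.mp hNm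
    rw [Finset.mem_range] at hk
    have hWle : cdiv l k * (h * m) + k * d ≤ B0 + m := by
      rw [hB0m]
      exact add_le_add (Nat.mul_le_mul_right _ (cdiv_mono hl (by omega)))
        (Nat.mul_le_mul_right _ (by omega))
    have hmodN : (cdiv l k * (h * m) + k * d) % m = N % m := by rw [hmodW k, hkd]
    set Wk := cdiv l k * (h * m) + k * d with hWk
    have hWkN : Wk ≤ N := by
      by_contra hc
      push_neg at hc
      have hdvd : m ∣ Wk - N := (Nat.modEq_iff_dvd' (le_of_lt hc)).mp hmodN.symm
      have hlt : Wk - N < m := by omega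
      have hpos : 0 < Wk - N := by omega
      have := Nat.le_of_dvd hpos hdvd
      omega
    obtain ⟨j, hj⟩ := (Nat.modEq_iff_dvd' hWkN).mp hmodN
    have hNe : N = Wk + j * m := by rw [mul_comm]; omega
    rw [hNe]
    exact S.add_mem (hWS k) (hmulS j)
  have hfrob : S.frob = (B0 : ℤ) := by
    have hub : ∀ x ∈ {x : ℤ | ∀ s ∈ S.carrier, (s : ℤ) ≠ x}, x ≤ (B0 : ℤ) := by
      intro x hx
      by_contra hc
      push_neg at hc
      have hx0 : 0 ≤ x := le_trans (by positivity) (le_of_lt hc)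
      obtain ⟨N, rfl⟩ : ∃ N : ℕ, (N : ℤ) = x := ⟨x.toNat, Int.toNat_of_nonneg hx0⟩
      have hN : B0 < N := by exact_mod_cast hc
      exact hx N (hbig N hN) rfl
    have hmem : (B0 : ℤ) ∈ {x : ℤ | ∀ s ∈ S.carrier, (s : ℤ) ≠ x} := by
      intro s hs hse
      have hsB : s = B0 := by exact_mod_cast hse
      exact hB0notS (hsB ▸ hs)
    exact le_antisymm (csSup_le ⟨_, hmem⟩ hub) (le_csSup ⟨(B0 : ℤ), hub⟩ hmem)
  -- counting elements below B0
  set c : ℕ → ℕ := fun k => (q - cdiv l k) * h + (m - 1 - k) * d / m with hcdef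
  set A := (Finset.range m).biUnion
    (fun k => (Finset.range (c k)).image (fun j => cdiv l k * (h * m) + k * d + j * m)) with hAdef
  have hAlt : ∀ k, k < m → ∀ j, j < c k → cdiv l k * (h * m) + k * d + j * m < B0 := by
    intro k hkm j hj
    have hcq : cdiv l k ≤ q := by rw [hqdef]; exact cdiv_mono hl (by omega)
    by_cases hk1 : k = m - 1
    · exfalso
      have hc0 : c k = 0 := by
        subst hk1
        simp [hcdef, ← hqdef]
      omega
    · have hklt : k < m - 1 := by omega
      have hndvd : ¬ m ∣ (m - 1 - k) * d := by
        intro hdvd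
        have hco : Nat.Coprime m d := hgcd
        have h2 : m ∣ (m - 1 - k) := hco.dvd_of_dvd_mul_right hdvd
        have := Nat.le_of_dvd (by omega) h2
        omega
      have hdm : ((m - 1 - k) * d / m) * m < (m - 1 - k) * d := by
        have h1 := Nat.div_add_mod ((m - 1 - k) * d) m
        have h2 : (m - 1 - k) * d % m ≠ 0 := fun hc => hndvd (Nat.dvd_of_mod_eq_zero hc)
        have h3 : m * ((m - 1 - k) * d / m) = ((m - 1 - k) * d / m) * m := by ring
        omega
      have hj2 : (j + 1) * m ≤ (c k) * m := Nat.mul_le_mul_right m hj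
      have hck : (c k) * m = (q - cdiv l k) * (h * m) + ((m - 1 - k) * d / m) * m := by
        simp only [hcdef]; ring
      have he1 : cdiv l k * (h * m) + (q - cdiv l k) * (h * m) = q * (h * m) := by
        rw [← add_mul]
        congr 1
        omega
      have he2 : k * d + (m - 1 - k) * d = (m - 1) * d := by
        rw [← add_mul]
        congr 1
        omega
      have hjm : (j + 1) * m = j * m + m := by ring
      omega
  have hmodA : ∀ k j : ℕ, (cdiv l k * (h * m) + k * d + j * m) % m = k * d % m := by
    intro k j
    have he : cdiv l k * (h * m) + k * d + j * m = k * d + (cdiv l k * h + j) * m := by ring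
    rw [he, Nat.add_mul_mod_self_right]
  have hAcard : A.card = ∑ k ∈ Finset.range m, c k := by
    rw [hAdef, Finset.card_biUnion]
    · apply Finset.sum_congr rfl
      intro k _
      rw [Finset.card_image_of_injective _ (fun a b hab => by
        have h1 : a * m = b * m := by omega
        exact Nat.eq_of_mul_eq_mul_right hm0 h1), Finset.card_range]
    · intro k hk k' hk' hne
      rw [Finset.mem_coe, Finset.mem_range] at hk hk'
      rw [Function.onFun, Finset.disjoint_left]
      intro x hx hx'
      obtain ⟨j, _, hxe⟩ := Finset.mem_image.mp hx
      obtain ⟨j', _, hxe'⟩ := Finset.mem_image.mp hx'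
      have h1 : x % m = k * d % m := by rw [← hxe]; exact hmodA k j
      have h2 : x % m = k' * d % m := by rw [← hxe']; exact hmodA k' j'
      exact hne (mod_cancel hgcd hk hk' (h1.symm.trans h2))
  have hsm : ∑ k ∈ Finset.range m, c k ≤ S.small := by
    have hAsub : (↑A : Set ℕ) ⊆ {s : ℕ | s ∈ S.carrier ∧ (s : ℤ) < S.frob} := by
      intro x hx
      rw [Finset.mem_coe, hAdef, Finset.mem_biUnion] at hx
      obtain ⟨k, hk, hx2⟩ := hx
      obtain ⟨j, hj, rfl⟩ := Finset.mem_image.mp hx2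
      rw [Finset.mem_range] at hk hj
      constructor
      · exact S.add_mem (hWS k) (hmulS j)
      · rw [hfrob]
        exact_mod_cast hAlt k hk j hj
    have hfin : {s : ℕ | s ∈ S.carrier ∧ (s : ℤ) < S.frob}.Finite := by
      apply Set.Finite.subset (Set.finite_Iio B0)
      intro s hs
      have h2 := hs.2
      rw [hfrob] at h2
      exact_mod_cast h2
    have hsmalldef : S.small = {s : ℕ | s ∈ S.carrier ∧ (s : ℤ) < S.frob}.ncard := rfl
    rw [hsmalldef, ← hAcard, ← Set.ncard_coe_finset A]
    exact Set.ncard_le_ncard hAsub hfin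
  -- embedding dimension lower bound
  have hpos : ∀ x ∈ S.carrier, x ≠ 0 → m ≤ x := by
    intro x hx hx0
    obtain ⟨a, B, K, h1, h2⟩ := hrep x hx
    rcases Nat.eq_zero_or_pos a with ha | ha
    · rcases Nat.eq_zero_or_pos B with hB | hB
      · have hl0 : l * B = 0 := by rw [hB]; ring
        have hK : K = 0 := by omega
        rw [ha, hB, hK] at h1
        simp at h1
        exact absurd h1 hx0
      · have h3 : 1 * (h * m) ≤ B * (h * m) := Nat.mul_le_mul_right _ hB
        omega
    · have h3 : 1 * m ≤ a * m := Nat.mul_le_mul_right _ ha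
      omega
  have hG0coe : ((insert m ((Finset.Icc 1 l).image (fun i => h * m + i * d)) : Finset ℕ) : Set ℕ)
      = ({m} : Set ℕ) ∪ (fun i => h * m + i * d) '' Set.Icc 1 l := by
    rw [Finset.coe_insert, Finset.coe_image, Finset.coe_Icc, Set.insert_eq]
  have hemb : l + 1 ≤ S.embdim := by
    have hne : {n : ℕ | ∃ G : Finset ℕ,
        S.carrier = (AddSubmonoid.closure (G : Set ℕ) : Set ℕ) ∧ G.card = n}.Nonempty :=
      ⟨_, insert m ((Finset.Icc 1 l).image (fun i => h * m + i * d)),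
        by rw [hgen, hG0coe], rfl⟩
    have hmem : S.embdim ∈ {n : ℕ | ∃ G : Finset ℕ,
        S.carrier = (AddSubmonoid.closure (G : Set ℕ) : Set ℕ) ∧ G.card = n} :=
      Nat.sInf_mem hne
    obtain ⟨Gf, hGf, hGfcard⟩ := hmem
    have hclosF : ∀ x : ℕ, x ∈ S.carrier ↔ x ∈ AddSubmonoid.closure (Gf : Set ℕ) := by
      intro x; rw [hGf]; exact Iff.rfl
    have hindm : m ∈ Gf := by
      apply mem_of_indecomp ((hclosF m).mp hmS) (by omega)
      intro a b ha hb ha0 hb0 hab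
      have h1 := hpos a ((hclosF a).mpr ha) ha0
      have h2 := hpos b ((hclosF b).mpr hb) hb0
      omega
    have hindg : ∀ i, 1 ≤ i → i ≤ l → h * m + i * d ∈ Gf := by
      intro i hi1 hil
      have hiS : h * m + i * d ∈ S.carrier := by
        have h1 := hWS i
        rw [cdiv_small hl hi1 hil, one_mul] at h1
        exact h1
      have hid1 : 1 * 1 ≤ i * d := Nat.mul_le_mul hi1 hd
      apply mem_of_indecomp ((hclosF _).mp hiS) (by omega)
      intro a b ha hb ha0 hb0 hab
      have haS := (hclosF a).mpr ha
      have hbS := (hclosF b).mpr hb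
      obtain ⟨a1, B1, K1, e1, f1⟩ := hrep a haS
      obtain ⟨a2, B2, K2, e2, f2⟩ := hrep b hbS
      have hmodx : (h * m + i * d) % m = i * d % m := by
        have he : h * m + i * d = i * d + h * m := by ring
        rw [he, Nat.add_mul_mod_self_right]
      have hmodab : (a + b) % m = (K1 + K2) * d % m := by
        rw [e1, e2]
        have he : a1 * m + B1 * (h * m) + K1 * d + (a2 * m + B2 * (h * m) + K2 * d)
            = (K1 + K2) * d + (a1 + a2 + (B1 + B2) * h) * m := by ring
        rw [he, Nat.add_mul_mod_self_right]
      have hKi : (K1 + K2) * d % m = i * d % m := by rw [← hmodab, hab, hmodx]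
      have him : i < m := by omega
      by_cases hK : K1 + K2 = i
      · have hB12 : 1 ≤ B1 + B2 := by
          by_contra hc
          push_neg at hc
          have hB1 : B1 = 0 := by omega
          have hB2 : B2 = 0 := by omega
          rw [hB1, Nat.mul_zero] at f1
          rw [hB2, Nat.mul_zero] at f2
          omega
        have heq : a + b = (a1 + a2) * m + (B1 + B2) * (h * m) + (K1 + K2) * d := by
          rw [e1, e2]; ring
        rw [hab, hK] at heq
        have heq2 : h * m = (a1 + a2) * m + (B1 + B2) * (h * m) := by omega
        have hlt2 : B1 + B2 < 2 := by
          by_contra hc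
          push_neg at hc
          have h5 : 2 * (h * m) ≤ (B1 + B2) * (h * m) := Nat.mul_le_mul_right _ hc
          have h6 : 2 * (h * m) = h * m + h * m := by ring
          omega
        have hB1e : B1 + B2 = 1 := by omega
        have h7 : 1 * (h * m) = h * m := one_mul _
        have ha12 : (a1 + a2) * m = 0 := by
          rw [hB1e] at heq2; omega
        have ha120 : a1 + a2 = 0 := by
          rcases Nat.mul_eq_zero.mp ha12 with h5 | h5
          · exact h5
          · omega
        rcases (by omega : B1 = 0 ∨ B2 = 0) with h0 | h0
        · rw [h0, Nat.mul_zero] at f1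
          have hK1 : K1 = 0 := by omega
          have ha1 : a1 = 0 := by omega
          have : a = 0 := by rw [e1, h0, hK1, ha1]; ring
          exact ha0 this
        · rw [h0, Nat.mul_zero] at f2
          have hK2 : K2 = 0 := by omega
          have ha2 : a2 = 0 := by omega
          have : b = 0 := by rw [e2, h0, hK2, ha2]; ring
          exact hb0 this
      · have hKge : i + m ≤ K1 + K2 := by
          by_contra hc
          push_neg at hc
          rcases le_or_gt i (K1 + K2) with h5 | h5
          · have hmod2 : (K1 + K2) % m = i % m :=
              Nat.ModEq.cancel_right_of_coprime hgcd hKi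
            have hdvd : m ∣ (K1 + K2) - i := (Nat.modEq_iff_dvd' h5).mp hmod2.symm
            have h6 : K1 + K2 - i ≠ 0 := by omega
            have := Nat.le_of_dvd (by omega) hdvd
            omega
          · have hlt : K1 + K2 < m := by omega
            have := mod_cancel hgcd hlt him hKi
            omega
        have hBge : 2 ≤ B1 + B2 := by
          by_contra hc
          push_neg at hc
          have h5 : l * (B1 + B2) ≤ l * 1 := Nat.mul_le_mul_left l (by omega)
          have h6 : l * (B1 + B2) = l * B1 + l * B2 := by ring
          have h7 : l * 1 = l := by ring
          omega
        have heq : a + b = (a1 + a2) * m + (B1 + B2) * (h * m) + (K1 + K2) * d := by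
          rw [e1, e2]; ring
        have h5 : 2 * (h * m) ≤ (B1 + B2) * (h * m) := Nat.mul_le_mul_right _ hBge
        have h6 : (i + m) * d ≤ (K1 + K2) * d := Nat.mul_le_mul_right _ hKge
        have h7 : (i + m) * d = i * d + m * d := by ring
        have h8 : m * 1 ≤ m * d := Nat.mul_le_mul_left _ hd
        have h9 : 2 * (h * m) = h * m + h * m := by ring
        omega
    have hnotmem : m ∉ (Finset.Icc 1 l).image (fun i => h * m + i * d) := by
      intro hmem2
      obtain ⟨i, hi, hie⟩ := Finset.mem_image.mp hmem2
      rw [Finset.mem_Icc] at hi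
      have : 1 * 1 ≤ i * d := Nat.mul_le_mul hi.1 hd
      omega
    have hinj : Set.InjOn (fun i => h * m + i * d) ↑(Finset.Icc 1 l) := by
      intro i hi j hj hij
      simp only at hij
      have : i * d = j * d := by omega
      exact Nat.eq_of_mul_eq_mul_right (by omega) this
    have hsubG : insert m ((Finset.Icc 1 l).image (fun i => h * m + i * d)) ⊆ Gf := by
      intro x hx
      rcases Finset.mem_insert.mp hx with rfl | hx
      · exact hindm
      · obtain ⟨i, hi, rfl⟩ := Finset.mem_image.mp hx
        rw [Finset.mem_Icc] at hi
        exact hindg i hi.1 hi.2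
    have hcard : (insert m ((Finset.Icc 1 l).image (fun i => h * m + i * d))).card = l + 1 := by
      rw [Finset.card_insert_of_notMem hnotmem, Finset.card_image_of_injOn hinj, Nat.card_Icc]
      omega
    calc l + 1 = _ := hcard.symm
      _ ≤ Gf.card := Finset.card_le_card hsubG
      _ = S.embdim := hGfcard
  -- final arithmetic
  have hEq := sum_ek hl (by omega : 2 ≤ m)
  rw [← hqdef] at hEq
  have hDq := sum_div_d hm0 hd hgcd
  have hrefl : ∑ k ∈ Finset.range m, (m - 1 - k) * d / m = ∑ k ∈ Finset.range m, k * d / m :=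
    Finset.sum_range_reflect (fun k => k * d / m) m
  have hsumc : ∑ k ∈ Finset.range m, c k
      = (∑ k ∈ Finset.range m, (q - cdiv l k)) * h + ∑ k ∈ Finset.range m, k * d / m := by
    simp only [hcdef]
    rw [Finset.sum_add_distrib, ← Finset.sum_mul, hrefl]
  have hql : m - 1 ≤ q * l := by rw [hqdef]; exact le_cdiv hl (m - 1)
  have hfin2 : B0 + 1 ≤ (∑ k ∈ Finset.range m, c k) * (l + 1) := by
    rw [hsumc]
    exact final_ineq hh hd hl hm3 hq1 hql hEq hDq hB0m
  have hmain : B0 + 1 ≤ S.small * S.embdim :=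
    le_trans hfin2 (Nat.mul_le_mul hsm hemb)
  rw [hfrob]
  exact_mod_cast hmain

end NumericalSemigroup
end

section
/- Let S be a numerical semigroup with m(S) − ν(S) ≤ 2. Then S satisfies Wilf's conjecture, i.e. f(S) + 1 ≤ n(S)·ν(S). -/
namespace NumericalSemigroup

section Aux

variable (S : NumericalSemigroup)

lemma exists_bound : ∃ B : ℕ, ∀ x : ℕ, B ≤ x → x ∈ S.carrier := by
  obtain ⟨B, hB⟩ := S.cofinite.bddAbove
  refine ⟨B + 1, fun x hx => ?_⟩
  by_contra hxc
  exact absurd (hB hxc) (by omega)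

lemma frob_bddAbove : BddAbove {x : ℤ | ∀ s ∈ S.carrier, (s : ℤ) ≠ x} := by
  obtain ⟨B, hB⟩ := S.exists_bound
  refine ⟨(B : ℤ), fun x hx => ?_⟩
  by_contra hxB
  push_neg at hxB
  have hx0 : 0 ≤ x := le_trans (by positivity) hxB.le
  have hmem : x.toNat ∈ S.carrier := hB _ (by omega)
  exact hx _ hmem (by omega)

lemma frob_nonempty : Set.Nonempty {x : ℤ | ∀ s ∈ S.carrier, (s : ℤ) ≠ x} :=
  ⟨-1, fun s _ => by omega⟩

lemma frob_spec1 : ∀ s ∈ S.carrier, (s : ℤ) ≠ S.frob :=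
  Int.csSup_mem S.frob_nonempty S.frob_bddAbove

lemma mem_of_frob_lt {x : ℕ} (hx : S.frob < (x : ℤ)) : x ∈ S.carrier := by
  by_contra hxc
  have hmem : (x : ℤ) ∈ {x : ℤ | ∀ s ∈ S.carrier, (s : ℤ) ≠ x} := by
    intro s hs hsx
    have : s = x := Nat.cast_inj.mp hsx
    exact hxc (this ▸ hs)
  exact absurd (le_csSup S.frob_bddAbove hmem) (not_le.mpr hx)

lemma mult_spec : S.mult ∈ S.carrier ∧ 0 < S.mult := by
  obtain ⟨B, hB⟩ := S.exists_bound
  have hne : {s : ℕ | s ∈ S.carrier ∧ 0 < s}.Nonempty := ⟨B + 1, hB _ (by omega), by omega⟩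
  exact Nat.sInf_mem hne

lemma mult_pos : 0 < S.mult := S.mult_spec.2

lemma mult_mem : S.mult ∈ S.carrier := S.mult_spec.1

lemma mult_le_of_mem {x : ℕ} (h0 : 0 < x) (hx : x ∈ S.carrier) : S.mult ≤ x :=
  Nat.sInf_le (s := {s : ℕ | s ∈ S.carrier ∧ 0 < s}) ⟨hx, h0⟩

lemma not_mem_of_lt_mult {x : ℕ} (h0 : 0 < x) (hx : x < S.mult) : x ∉ S.carrier :=
  fun hc => absurd (S.mult_le_of_mem h0 hc) (not_le.mpr hx)

lemma frob_of_mult_one (h : S.mult = 1) : S.frob = -1 := by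
  have h1 : (1 : ℕ) ∈ S.carrier := h ▸ S.mult_mem
  have hall : ∀ x : ℕ, x ∈ S.carrier := by
    intro x
    induction x with
    | zero => exact S.zero_mem
    | succ n ih => exact S.add_mem ih h1
  apply IsGreatest.csSup_eq
  constructor
  · intro s _ hs
    omega
  · intro x hx
    by_contra hc
    push_neg at hc
    exact hx x.toNat (hall _) (by omega)

lemma one_le_frob (hm2 : 2 ≤ S.mult) : 1 ≤ S.frob := by
  apply le_csSup S.frob_bddAbove
  intro s hs hs1
  exact S.not_mem_of_lt_mult (x := 1) (by omega) (by omega) (by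
    have : s = 1 := by exact_mod_cast hs1
    rwa [this] at hs)

lemma add_mul_mult_mem {u : ℕ} (hu : u ∈ S.carrier) (k : ℕ) :
    u + k * S.mult ∈ S.carrier := by
  induction k with
  | zero => simpa using hu
  | succ n ih =>
    have h := S.add_mem ih S.mult_mem
    have : u + n * S.mult + S.mult = u + (n + 1) * S.mult := by ring
    rwa [this] at h

lemma apery_ncard : S.apery.ncard = S.mult := by
  have hm := S.mult_pos
  have hinj : Set.InjOn (· % S.mult) S.apery := by
    intro a ha b hb hab
    by_contra hne
    have key : ∀ x y : ℕ, x ∈ S.apery → y ∈ S.apery → x % S.mult = y % S.mult →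
        x < y → False := by
      intro x y hx hy hxy hlt
      have hdvd : S.mult ∣ y - x := (Nat.modEq_iff_dvd' hlt.le).mp hxy
      obtain ⟨k, hk⟩ := hdvd
      rcases k with _ | k'
      · omega
      · rw [Nat.mul_succ] at hk
        have hmem : x + S.mult * k' ∈ S.carrier := by
          have := S.add_mul_mult_mem hx.1 k'
          rwa [Nat.mul_comm k' S.mult] at this
        exact hy.2 _ hmem (by omega)
    rcases Nat.lt_or_ge a b with hlt | hge
    · exact key a b ha hb hab hlt
    · exact key b a hb ha hab.symm (by omega)
  have himg : (· % S.mult) '' S.apery = Set.Iio S.mult := by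
    apply Set.Subset.antisymm
    · rintro _ ⟨a, _, rfl⟩
      exact Nat.mod_lt _ hm
    · intro r hr
      obtain ⟨B, hB⟩ := S.exists_bound
      have hne : {k : ℕ | r + k * S.mult ∈ S.carrier}.Nonempty := by
        refine ⟨B, hB _ ?_⟩
        have : B ≤ B * S.mult := Nat.le_mul_of_pos_right B hm
        omega
      set k0 := sInf {k : ℕ | r + k * S.mult ∈ S.carrier} with hk0
      have hk0mem : r + k0 * S.mult ∈ S.carrier := Nat.sInf_mem hne
      have hrlt : r < S.mult := hr
      refine ⟨r + k0 * S.mult, ⟨hk0mem, ?_⟩, ?_⟩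
      · intro u hu hequ
        rcases Nat.eq_zero_or_pos k0 with h0 | hpos
        · rw [h0] at hequ
          simp at hequ
          omega
        · have h1 : (k0 - 1) * S.mult + S.mult = k0 * S.mult := by
            conv_rhs => rw [← Nat.succ_pred_eq_of_pos hpos]
            rw [Nat.succ_mul, Nat.sub_one]
          have hu_eq : u = r + (k0 - 1) * S.mult := by omega
          have hmem : k0 - 1 ∈ {k : ℕ | r + k * S.mult ∈ S.carrier} := by
            rw [Set.mem_setOf_eq, ← hu_eq]
            exact hu
          have := Nat.sInf_le hmem
          omega
      · simp [Nat.add_mul_mod_self_right, Nat.mod_eq_of_lt hrlt]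
  calc S.apery.ncard = ((· % S.mult) '' S.apery).ncard :=
        (Set.ncard_image_of_injOn hinj).symm
    _ = (Set.Iio S.mult).ncard := by rw [himg]
    _ = S.mult := by rw [← Finset.coe_Iio, Set.ncard_coe_finset, Nat.card_Iio]

lemma zero_mem_apery : 0 ∈ S.apery :=
  ⟨S.zero_mem, fun u _ h => by have := S.mult_pos; omega⟩

/-- Apéry set minus zero. -/
def Ap0 : Set ℕ := S.apery \ {0}

/-- Decomposable nonzero Apéry elements. -/
def Dset : Set ℕ :=
  {a | a ∈ S.Ap0 ∧ ∃ u v : ℕ, u ∈ S.carrier ∧ v ∈ S.carrier ∧ 0 < u ∧ 0 < v ∧ u + v = a}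

/-- Indecomposable nonzero Apéry elements. -/
def Aset : Set ℕ := S.Ap0 \ S.Dset

/-- Non-maximal nonzero Apéry elements. -/
def Nset : Set ℕ :=
  {a | a ∈ S.Ap0 ∧ ∃ s ∈ S.carrier, 0 < s ∧ a + s ∈ S.apery}

lemma Ap0_subset : S.Ap0 ⊆ S.apery := Set.diff_subset

lemma Ap0_finite : S.Ap0.Finite := S.apery_finite.subset S.Ap0_subset

lemma Dset_subset : S.Dset ⊆ S.Ap0 := fun _ h => h.1

lemma Nset_subset : S.Nset ⊆ S.Ap0 := fun _ h => h.1

lemma Ap0_ncard : S.Ap0.ncard = S.mult - 1 := by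
  rw [Ap0, Set.ncard_diff_singleton_of_mem S.zero_mem_apery, S.apery_ncard]

lemma decomp_mem_N {u v a : ℕ} (hu : u ∈ S.carrier) (hv : v ∈ S.carrier)
    (hu0 : 0 < u) (hv0 : 0 < v) (huv : u + v = a) (ha : a ∈ S.apery) :
    u ∈ S.Nset := by
  have huap : u ∈ S.apery := by
    refine ⟨hu, fun t ht hteq => ?_⟩
    exact ha.2 (t + v) (S.add_mem ht hv) (by omega)
  exact ⟨⟨huap, by simp; omega⟩, v, hv, hv0, huv ▸ ha⟩

end Aux

section Aux2

variable (S : NumericalSemigroup)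

/-- Atoms (minimal generators). -/
def Atoms : Set ℕ :=
  {a | a ∈ S.carrier ∧ 0 < a ∧
    ¬∃ u v : ℕ, u ∈ S.carrier ∧ v ∈ S.carrier ∧ 0 < u ∧ 0 < v ∧ u + v = a}

lemma atoms_eq : S.Atoms = insert S.mult S.Aset := by
  ext a
  simp only [Set.mem_insert_iff]
  constructor
  · rintro ⟨hac, ha0, hnd⟩
    by_cases ham : a = S.mult
    · exact Or.inl ham
    · refine Or.inr ⟨⟨⟨hac, ?_⟩, ?_⟩, fun hD => hnd hD.2⟩
      · intro u hu hua
        rcases Nat.eq_zero_or_pos u with rfl | hu0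
        · exact ham (by omega)
        · exact hnd ⟨u, S.mult, hu, S.mult_mem, hu0, S.mult_pos, hua⟩
      · simp only [Set.mem_singleton_iff]
        omega
  · rintro (rfl | hA)
    · refine ⟨S.mult_mem, S.mult_pos, ?_⟩
      rintro ⟨u, v, hu, hv, hu0, hv0, huv⟩
      have h1 := S.mult_le_of_mem hu0 hu
      have h2 := S.mult_le_of_mem hv0 hv
      omega
    · obtain ⟨⟨haap, ha0⟩, hnD⟩ := hA
      simp only [Set.mem_singleton_iff] at ha0
      exact ⟨haap.1, by omega, fun hd => hnD ⟨⟨haap, by simpa using ha0⟩, hd⟩⟩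

lemma Aset_finite : S.Aset.Finite := S.Ap0_finite.subset Set.diff_subset

lemma atoms_finite : S.Atoms.Finite := by
  rw [S.atoms_eq]
  exact S.Aset_finite.insert _

/-- `S.carrier` as an additive submonoid. -/
def toAddSubmonoid : AddSubmonoid ℕ where
  carrier := S.carrier
  zero_mem' := S.zero_mem
  add_mem' := fun ha hb => S.add_mem ha hb

lemma mem_closure_atoms : ∀ s ∈ S.carrier, s ∈ AddSubmonoid.closure S.Atoms := by
  intro s
  induction s using Nat.strong_induction_on with
  | _ s ih =>
    intro hs
    rcases Nat.eq_zero_or_pos s with rfl | hs0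
    · exact AddSubmonoid.zero_mem _
    by_cases hatom : s ∈ S.Atoms
    · exact AddSubmonoid.subset_closure hatom
    · have hd : ∃ u v : ℕ, u ∈ S.carrier ∧ v ∈ S.carrier ∧ 0 < u ∧ 0 < v ∧ u + v = s := by
        by_contra hnd
        exact hatom ⟨hs, hs0, hnd⟩
      obtain ⟨u, v, hu, hv, hu0, hv0, huv⟩ := hd
      have hsum := AddSubmonoid.add_mem _ (ih u (by omega) hu) (ih v (by omega) hv)
      rwa [huv] at hsum

lemma carrier_eq_closure_atoms :
    S.carrier = (AddSubmonoid.closure ((S.atoms_finite.toFinset : Finset ℕ) : Set ℕ) : Set ℕ) := by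
  rw [Set.Finite.coe_toFinset]
  apply Set.Subset.antisymm
  · exact fun s hs => S.mem_closure_atoms s hs
  · have hle : AddSubmonoid.closure S.Atoms ≤ S.toAddSubmonoid :=
      (AddSubmonoid.closure_le (S := S.toAddSubmonoid)).mpr (fun a ha => ha.1)
    exact fun x hx => hle hx

lemma atom_mem_gen {G : Finset ℕ} (hG : S.carrier = (AddSubmonoid.closure (G : Set ℕ) : Set ℕ))
    {a : ℕ} (ha : a ∈ S.Atoms) : a ∈ G := by
  have hmem : a ∈ AddSubmonoid.closure (G : Set ℕ) := by
    have h1 := ha.1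
    rwa [hG] at h1
  have key : ∀ x, x ∈ AddSubmonoid.closure (G : Set ℕ) → x = 0 ∨ x ∈ G ∨
      ∃ u v : ℕ, u ∈ S.carrier ∧ v ∈ S.carrier ∧ 0 < u ∧ 0 < v ∧ u + v = x := by
    intro x hx
    refine AddSubmonoid.closure_induction (motive := fun x _ => x = 0 ∨ x ∈ G ∨
        ∃ u v : ℕ, u ∈ S.carrier ∧ v ∈ S.carrier ∧ 0 < u ∧ 0 < v ∧ u + v = x)
      (fun y hy => Or.inr (Or.inl hy)) (Or.inl rfl) ?_ hx
    intro x y hxc hyc ihx ihy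
    rcases Nat.eq_zero_or_pos x with rfl | hx0
    · simpa using ihy
    rcases Nat.eq_zero_or_pos y with rfl | hy0
    · simpa using ihx
    have hxS : x ∈ S.carrier := by rw [hG]; exact hxc
    have hyS : y ∈ S.carrier := by rw [hG]; exact hyc
    exact Or.inr (Or.inr ⟨x, y, hxS, hyS, hx0, hy0, rfl⟩)
  rcases key a hmem with h0 | hG' | hd
  · exact absurd h0 (by have := ha.2.1; omega)
  · exact hG'
  · exact absurd hd ha.2.2

lemma mult_not_mem_Aset : S.mult ∉ S.Aset := by
  intro hc
  exact hc.1.1.2 0 S.zero_mem (by simp)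

lemma atoms_ncard : S.Atoms.ncard = 1 + S.Aset.ncard := by
  rw [S.atoms_eq, Set.ncard_insert_of_notMem S.mult_not_mem_Aset S.Aset_finite]
  omega

lemma embdim_eq : S.embdim = 1 + S.Aset.ncard := by
  apply le_antisymm
  · apply Nat.sInf_le
    exact ⟨S.atoms_finite.toFinset, S.carrier_eq_closure_atoms, by
      rw [← Set.ncard_eq_toFinset_card _ S.atoms_finite, S.atoms_ncard]⟩
  · refine le_csInf ⟨S.atoms_finite.toFinset.card, S.atoms_finite.toFinset,
      S.carrier_eq_closure_atoms, rfl⟩ ?_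
    rintro n ⟨G, hG, rfl⟩
    have hsub : S.Atoms ⊆ (G : Set ℕ) := fun a ha => S.atom_mem_gen hG ha
    have hle := Set.ncard_le_ncard hsub G.finite_toSet
    rwa [Set.ncard_coe_finset, S.atoms_ncard] at hle

lemma card_split : S.Aset.ncard + S.Dset.ncard = S.mult - 1 := by
  have h1 : S.Aset.ncard = S.Ap0.ncard - S.Dset.ncard :=
    Set.ncard_diff S.Dset_subset (S.Ap0_finite.subset S.Dset_subset)
  have h2 : S.Dset.ncard ≤ S.Ap0.ncard := Set.ncard_le_ncard S.Dset_subset S.Ap0_finite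
  rw [S.Ap0_ncard] at h1 h2
  omega

end Aux2

section Aux3

variable (S : NumericalSemigroup)

lemma N_card_ge (hD2 : S.Dset.ncard ≤ 2) : S.Dset.ncard ≤ S.Nset.ncard := by
  have hNfin : S.Nset.Finite := S.Ap0_finite.subset S.Nset_subset
  rcases Nat.lt_or_ge S.Dset.ncard 1 with h0 | h1
  · omega
  rcases Nat.lt_or_ge S.Dset.ncard 2 with hc1 | hc2
  · have hone : S.Dset.ncard = 1 := by omega
    obtain ⟨a, hDa⟩ := Set.ncard_eq_one.mp hone
    have haD : a ∈ S.Dset := by rw [hDa]; exact rfl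
    obtain ⟨haAp0, u, v, hu, hv, hu0, hv0, huv⟩ := haD
    have huN : u ∈ S.Nset := S.decomp_mem_N hu hv hu0 hv0 huv (S.Ap0_subset haAp0)
    have hpos : 0 < S.Nset.ncard := (Set.ncard_pos hNfin).mpr ⟨u, huN⟩
    omega
  · have hD2' : S.Dset.ncard = 2 := by omega
    obtain ⟨a, b, hab, hDab⟩ := Set.ncard_eq_two.mp hD2'
    have haD : a ∈ S.Dset := by rw [hDab]; exact Or.inl rfl
    have hbD : b ∈ S.Dset := by rw [hDab]; exact Or.inr rfl
    obtain ⟨haAp0, u1, v1, hu1, hv1, hu10, hv10, huv1⟩ := haD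
    obtain ⟨hbAp0, u2, v2, hu2, hv2, hu20, hv20, huv2⟩ := hbD
    have hu1N : u1 ∈ S.Nset := S.decomp_mem_N hu1 hv1 hu10 hv10 huv1 (S.Ap0_subset haAp0)
    have hv1N : v1 ∈ S.Nset := S.decomp_mem_N hv1 hu1 hv10 hu10 (by omega) (S.Ap0_subset haAp0)
    have hu2N : u2 ∈ S.Nset := S.decomp_mem_N hu2 hv2 hu20 hv20 huv2 (S.Ap0_subset hbAp0)
    have hv2N : v2 ∈ S.Nset := S.decomp_mem_N hv2 hu2 hv20 hu20 (by omega) (S.Ap0_subset hbAp0)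
    have hpair : ∃ x y : ℕ, x ≠ y ∧ x ∈ S.Nset ∧ y ∈ S.Nset := by
      by_cases h11 : u1 = v1
      · by_cases h22 : u2 = v2
        · exact ⟨u1, u2, fun hEq => hab (by omega), hu1N, hu2N⟩
        · exact ⟨u2, v2, h22, hu2N, hv2N⟩
      · exact ⟨u1, v1, h11, hu1N, hv1N⟩
    obtain ⟨x, y, hxy, hxN, hyN⟩ := hpair
    have hsub : ({x, y} : Set ℕ) ⊆ S.Nset := by
      intro z hz
      simp only [Set.mem_insert_iff, Set.mem_singleton_iff] at hz
      rcases hz with rfl | rfl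
      exacts [hxN, hyN]
    have hle := Set.ncard_le_ncard hsub hNfin
    rw [Set.ncard_pair hxy] at hle
    omega

/-- The set of pseudo-Frobenius numbers. -/
def PFset : Set ℤ :=
  {x : ℤ | (∀ s ∈ S.carrier, (s : ℤ) ≠ x) ∧
    ∀ s ∈ S.carrier, 0 < s → ∃ u ∈ S.carrier, (u : ℤ) = x + s}

lemma typ_eq : S.typ = S.PFset.ncard := rfl

lemma Ap0_nonempty (hm2 : 2 ≤ S.mult) : S.Ap0.Nonempty := by
  apply Set.nonempty_of_ncard_ne_zero
  rw [S.Ap0_ncard]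
  omega

lemma pf_nonneg (hm2 : 2 ≤ S.mult) {p : ℤ} (hp : p ∈ S.PFset) : 0 ≤ p := by
  obtain ⟨h1, h2⟩ := hp
  obtain ⟨u0, hu0, hu0e⟩ := h2 S.mult S.mult_mem S.mult_pos
  by_contra hneg
  push_neg at hneg
  have hu0m : u0 < S.mult := by omega
  have hu00 : u0 = 0 := by
    by_contra hne
    exact S.not_mem_of_lt_mult (by omega) hu0m hu0
  obtain ⟨a, haAp0⟩ := S.Ap0_nonempty hm2
  have haap : a ∈ S.apery := S.Ap0_subset haAp0
  have ha0 : a ≠ 0 := by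
    intro hzero
    exact haAp0.2 (by simp [hzero])
  obtain ⟨u, hu, hue⟩ := h2 a haap.1 (by omega)
  exact haap.2 u hu (by omega)

lemma pf_image (hm2 : 2 ≤ S.mult) {p : ℤ} (hp : p ∈ S.PFset) :
    (p + S.mult).toNat ∈ S.Ap0 \ S.Nset ∧ ((p + S.mult).toNat : ℤ) = p + S.mult := by
  obtain ⟨h1, h2⟩ := hp
  have hp0 : 0 ≤ p := S.pf_nonneg hm2 ⟨h1, h2⟩
  have hcast : ((p + S.mult).toNat : ℤ) = p + S.mult := Int.toNat_of_nonneg (by omega)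
  set y := (p + S.mult).toNat with hy
  obtain ⟨u0, hu0, hu0e⟩ := h2 S.mult S.mult_mem S.mult_pos
  have hyu0 : y = u0 := by omega
  have hyc : y ∈ S.carrier := hyu0 ▸ hu0
  have hyap : y ∈ S.apery := by
    refine ⟨hyc, fun t ht hteq => ?_⟩
    exact h1 t ht (by omega)
  have hyN : y ∉ S.Nset := by
    rintro ⟨-, s, hs, hs0, hys⟩
    obtain ⟨u, hu, hue⟩ := h2 s hs hs0
    exact hys.2 u hu (by omega)
  refine ⟨⟨⟨hyap, ?_⟩, hyN⟩, hcast⟩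
  simp only [Set.mem_singleton_iff]
  omega

lemma pf_finite (hm2 : 2 ≤ S.mult) : S.PFset.Finite := by
  have hinj : Set.InjOn (fun p : ℤ => (p + S.mult).toNat) S.PFset := by
    intro p1 h1 p2 h2 he
    have c1 := (S.pf_image hm2 h1).2
    have c2 := (S.pf_image hm2 h2).2
    simp only at he
    omega
  apply Set.Finite.of_finite_image ?_ hinj
  apply S.apery_finite.subset
  rintro _ ⟨p, hp, rfl⟩
  exact S.Ap0_subset ((S.pf_image hm2 hp).1.1)

lemma typ_bound (hm2 : 2 ≤ S.mult) : S.typ + S.Nset.ncard + 1 ≤ S.mult := by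
  have hNsub : S.Nset ⊆ S.Ap0 := S.Nset_subset
  have hinj : Set.InjOn (fun p : ℤ => (p + S.mult).toNat) S.PFset := by
    intro p1 h1 p2 h2 he
    have c1 := (S.pf_image hm2 h1).2
    have c2 := (S.pf_image hm2 h2).2
    simp only at he
    omega
  have himgsub : (fun p : ℤ => (p + S.mult).toNat) '' S.PFset ⊆ S.Ap0 \ S.Nset := by
    rintro _ ⟨p, hp, rfl⟩
    exact (S.pf_image hm2 hp).1
  have h1 : S.typ = ((fun p : ℤ => (p + S.mult).toNat) '' S.PFset).ncard := by
    rw [S.typ_eq]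
    exact (Set.ncard_image_of_injOn hinj).symm
  have h2 : ((fun p : ℤ => (p + S.mult).toNat) '' S.PFset).ncard ≤ (S.Ap0 \ S.Nset).ncard :=
    Set.ncard_le_ncard himgsub (S.Ap0_finite.subset Set.diff_subset)
  have h3 : (S.Ap0 \ S.Nset).ncard = S.Ap0.ncard - S.Nset.ncard :=
    Set.ncard_diff hNsub (S.Ap0_finite.subset hNsub)
  have h4 : S.Nset.ncard ≤ S.Ap0.ncard := Set.ncard_le_ncard hNsub S.Ap0_finite
  have h5 := S.Ap0_ncard
  omega

lemma small_finite : {s : ℕ | s ∈ S.carrier ∧ (s : ℤ) < S.frob}.Finite := by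
  apply Set.Finite.subset (Set.finite_Iio (S.frob.toNat + 1))
  intro x hx
  simp only [Set.mem_Iio]
  have h2 := hx.2
  omega

lemma frob_count (hm2 : 2 ≤ S.mult) :
    S.frob + 1 = (S.small : ℤ) + ({x : ℕ | x ∉ S.carrier}.ncard : ℤ) := by
  have hf1 := S.one_le_frob hm2
  set F := S.frob.toNat with hF
  have hFe : (F : ℤ) = S.frob := Int.toNat_of_nonneg (by omega)
  have hunion : {s : ℕ | s ∈ S.carrier ∧ (s : ℤ) < S.frob} ∪ {x : ℕ | x ∉ S.carrier}
      = Set.Iic F := by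
    ext x
    simp only [Set.mem_union, Set.mem_setOf_eq, Set.mem_Iic]
    constructor
    · rintro (⟨-, hlt⟩ | hns)
      · omega
      · by_contra hgt
        push_neg at hgt
        exact hns (S.mem_of_frob_lt (by omega))
    · intro hle
      by_cases hx : x ∈ S.carrier
      · left
        refine ⟨hx, ?_⟩
        have hne := S.frob_spec1 x hx
        omega
      · right
        exact hx
  have hdisj : Disjoint {s : ℕ | s ∈ S.carrier ∧ (s : ℤ) < S.frob} {x : ℕ | x ∉ S.carrier} := by
    rw [Set.disjoint_left]
    rintro x ⟨hx, -⟩ hnx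
    exact hnx hx
  have hcard := Set.ncard_union_eq hdisj S.small_finite S.cofinite
  rw [hunion] at hcard
  have hIic : (Set.Iic F).ncard = F + 1 := by
    rw [← Finset.coe_Iic, Set.ncard_coe_finset, Nat.card_Iic]
  rw [hIic] at hcard
  have hsmall : S.small = {s : ℕ | s ∈ S.carrier ∧ (s : ℤ) < S.frob}.ncard := rfl
  rw [hsmall]
  omega

lemma gaps_le (hm2 : 2 ≤ S.mult) :
    {x : ℕ | x ∉ S.carrier}.ncard ≤ S.typ * S.small := by
  classical
  set T : ℕ → Set ℕ := fun x => {y : ℕ | y ∉ S.carrier ∧ ∃ s ∈ S.carrier, y = x + s} with hT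
  have hTfin : ∀ x, (T x).Finite := fun x => S.cofinite.subset (fun y hy => hy.1)
  have hTne : ∀ x, x ∉ S.carrier → (T x).Nonempty :=
    fun x hx => ⟨x, hx, 0, S.zero_mem, rfl⟩
  set P : ℕ → ℕ := fun x => sSup (T x) with hP
  have hPmem : ∀ x, x ∉ S.carrier → P x ∈ T x :=
    fun x hx => Set.Nonempty.csSup_mem (hTne x hx) (hTfin x)
  have hPub : ∀ x y, y ∈ T x → y ≤ P x := fun x y hy => le_csSup (hTfin x).bddAbove hy
  have hPF : ∀ x, x ∉ S.carrier → ∀ s ∈ S.carrier, 0 < s → P x + s ∈ S.carrier := by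
    intro x hx s hs hs0
    by_contra hns
    obtain ⟨-, s0, hs0', hPe⟩ := hPmem x hx
    have hmem : P x + s ∈ T x := ⟨hns, s0 + s, S.add_mem hs0' hs, by omega⟩
    have hub := hPub x _ hmem
    omega
  have hPFfin := S.pf_finite hm2
  have hSfin := S.small_finite
  have hGfin : {x : ℕ | x ∉ S.carrier}.Finite := S.cofinite
  set Φ : ℕ → ℤ × ℕ := fun x => ((P x : ℤ), P x - x) with hΦ
  have hmaps : ∀ x ∈ hGfin.toFinset, Φ x ∈ hPFfin.toFinset ×ˢ hSfin.toFinset := by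
    intro x hx
    rw [Set.Finite.mem_toFinset] at hx
    obtain ⟨hPnx, s0, hs0, hPe⟩ := hPmem x hx
    have hx1 : 1 ≤ x := by
      rcases Nat.eq_zero_or_pos x with rfl | hxpos
      · exact absurd S.zero_mem hx
      · omega
    have hPleF : (P x : ℤ) ≤ S.frob := by
      by_contra hgt
      push_neg at hgt
      exact hPnx (S.mem_of_frob_lt hgt)
    rw [Finset.mem_product, Set.Finite.mem_toFinset, Set.Finite.mem_toFinset]
    simp only [hΦ]
    constructor
    · refine ⟨fun s hs hse => ?_, fun s hs hs0' => ⟨P x + s, hPF x hx s hs hs0', by push_cast; ring⟩⟩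
      have hsP : s = P x := by exact_mod_cast hse
      exact hPnx (hsP ▸ hs)
    · constructor
      · have hPxs : P x - x = s0 := by omega
        show P x - x ∈ S.carrier
        rw [hPxs]
        exact hs0
      · show ((P x - x : ℕ) : ℤ) < S.frob
        omega
  have hinj : Set.InjOn Φ hGfin.toFinset := by
    intro x1 h1 x2 h2 he
    rw [Finset.mem_coe, Set.Finite.mem_toFinset] at h1 h2
    obtain ⟨-, s1, -, he1⟩ := hPmem x1 h1
    obtain ⟨-, s2, -, he2⟩ := hPmem x2 h2
    have hfst : (P x1 : ℤ) = (P x2 : ℤ) := congrArg Prod.fst he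
    have hsnd : P x1 - x1 = P x2 - x2 := congrArg Prod.snd he
    omega
  have hcount := Finset.card_le_card_of_injOn Φ hmaps hinj
  rw [Finset.card_product] at hcount
  rw [Set.ncard_eq_toFinset_card _ hGfin, S.typ_eq,
    Set.ncard_eq_toFinset_card _ hPFfin]
  have hsm : S.small = hSfin.toFinset.card := Set.ncard_eq_toFinset_card _ hSfin
  rw [hsm]
  exact hcount

end Aux3

/-- If `m(S) - ν(S) ≤ 2` then `S` satisfies Wilf's conjecture. -/
theorem wilf_of_mult_sub_embdim_le_two (S : NumericalSemigroup)
    (h : S.mult - S.embdim ≤ 2) :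
    S.frob + 1 ≤ (S.small : ℤ) * (S.embdim : ℤ) := by
  rcases Nat.lt_or_ge S.mult 2 with hm1 | hm2
  · have hm : S.mult = 1 := by
      have := S.mult_pos
      omega
    rw [S.frob_of_mult_one hm]
    have hpos : (0 : ℤ) ≤ (S.small : ℤ) * (S.embdim : ℤ) := by positivity
    omega
  · have hE := S.embdim_eq
    have hsplit := S.card_split
    have hD2 : S.Dset.ncard ≤ 2 := by omega
    have hN := S.N_card_ge hD2
    have htypb := S.typ_bound hm2
    have ht1 : S.typ + 1 ≤ S.embdim := by omega
    have hfc := S.frob_count hm2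
    have hgle := S.gaps_le hm2
    have key : S.small + {x : ℕ | x ∉ S.carrier}.ncard ≤ S.small * S.embdim := by
      calc S.small + {x : ℕ | x ∉ S.carrier}.ncard ≤ S.small + S.typ * S.small := by omega
        _ = S.small * (S.typ + 1) := by ring
        _ ≤ S.small * S.embdim := Nat.mul_le_mul_left _ ht1
    rw [hfc]
    exact_mod_cast key

end NumericalSemigroup
end
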